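/- Let a > 0 be real and k ≥ 2 an integer, and let z₀ > 0 satisfy q_{a,k}(z₀) = 0, where q_{a,k}(x) = a·x^k − a·x^{k−1} + x − k. Then z₀ is the unique global minimizer of g_{a,k}(x) = (a/x + 1/x^k)·e^x on (0, ∞): for every x > 0 with x ≠ z₀ one has g_{a,k}(z₀) < g_{a,k}(x). -/

import Mathlib

noncomputable def hpjG (a : ℝ) (k : ℕ) (x : ℝ) : ℝ := (a / x + 1 / x ^ k) * Real.exp x

def hpjQ (a : ℝ) (k : ℕ) (x : ℝ) : ℝ := a * x ^ k - a * x ^ (k - 1) + x - k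

lemma hpjQ_hasDeriv (a : ℝ) (m : ℕ) (x : ℝ) :
    HasDerivAt (hpjQ a (m + 2))
      (a * (((m:ℝ) + 2) * x ^ (m + 1)) - a * (((m:ℝ) + 1) * x ^ m) + 1) x := by
  have h := ((((hasDerivAt_pow (m + 2) x).const_mul a).sub
      ((hasDerivAt_pow (m + 1) x).const_mul a)).add (hasDerivAt_id x)).sub_const
      (((m:ℝ) + 2))
  have he : hpjQ a (m + 2) = fun y : ℝ =>
      a * y ^ (m + 2) - a * y ^ (m + 1) + y - ((m:ℝ) + 2) := by
    funext y; simp only [hpjQ]; push_cast; ring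
  rw [he]
  refine h.congr_deriv ?_
  push_cast
  ring

lemma hpjG_hasDeriv (a : ℝ) (m : ℕ) {x : ℝ} (hx : 0 < x) :
    HasDerivAt (hpjG a (m + 2)) (Real.exp x * hpjQ a (m + 2) x / x ^ (m + 3)) x := by
  have hx0 : x ≠ 0 := hx.ne'
  have h1 : HasDerivAt (fun y : ℝ => a / y) (-(a / x ^ 2)) x := by
    simpa [div_eq_mul_inv, mul_comm, neg_mul, mul_neg] using (hasDerivAt_inv hx0).const_mul a
  have h2 : HasDerivAt (fun y : ℝ => 1 / y ^ (m + 2))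
      (-(((m:ℝ) + 2) * x ^ (m + 1)) / (x ^ (m + 2)) ^ 2) x := by
    have := (hasDerivAt_pow (m + 2) x).fun_inv (pow_ne_zero _ hx0)
    simpa [one_div] using this
  have h := (h1.add h2).mul (Real.hasDerivAt_exp x)
  have he : hpjG a (m + 2) = fun y : ℝ => (a / y + 1 / y ^ (m + 2)) * Real.exp y := rfl
  rw [he]
  refine h.congr_deriv ?_
  have hq : hpjQ a (m + 2) x = a * x ^ (m + 2) - a * x ^ (m + 1) + x - ((m:ℝ) + 2) := by
    simp only [hpjQ]; push_cast; ring
  rw [hq]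
  simp only [Pi.add_apply]
  field_simp
  ring

theorem stmt7 (a : ℝ) (ha : 0 < a) (k : ℕ) (hk : 2 ≤ k)
    (z₀ : ℝ) (hz₀ : 0 < z₀) (hq : hpjQ a k z₀ = 0) :
    ∀ x : ℝ, 0 < x → x ≠ z₀ → hpjG a k z₀ < hpjG a k x := by
  obtain ⟨m, rfl⟩ : ∃ m, k = m + 2 := ⟨k - 2, by omega⟩
  -- q is negative on (0,1]
  have hqneg1 : ∀ x : ℝ, 0 < x → x ≤ 1 → hpjQ a (m + 2) x < 0 := by
    intro x hx hx1
    have hpow : x ^ (m + 2) ≤ x ^ (m + 1) :=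
      pow_le_pow_of_le_one hx.le hx1 (by omega)
    have : a * x ^ (m + 2) ≤ a * x ^ (m + 1) :=
      mul_le_mul_of_nonneg_left hpow ha.le
    have hq : hpjQ a (m + 2) x = a * x ^ (m + 2) - a * x ^ (m + 1) + x - ((m:ℝ) + 2) := by
      simp only [hpjQ]; push_cast; ring
    rw [hq]
    nlinarith [Nat.cast_nonneg (α := ℝ) m]
  -- q strictly increasing on [1, ∞)
  have hqmono : StrictMonoOn (hpjQ a (m + 2)) (Set.Ici (1 : ℝ)) := by
    apply strictMonoOn_of_deriv_pos (convex_Ici 1)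
    · exact fun y _ => (hpjQ_hasDeriv a m y).continuousAt.continuousWithinAt
    · intro y hy
      rw [interior_Ici] at hy
      rw [(hpjQ_hasDeriv a m y).deriv]
      have hy1 : (1:ℝ) < y := hy
      have hp : y ^ m ≤ y ^ (m + 1) := pow_le_pow_right₀ (by linarith) (by omega)
      have hpm : (0:ℝ) < y ^ m := pow_pos (by linarith) m
      have h1 : ((m:ℝ)+2) * y ^ m ≤ ((m:ℝ)+2) * y ^ (m+1) :=
        mul_le_mul_of_nonneg_left hp (by positivity)
      nlinarith [mul_pos ha hpm, mul_le_mul_of_nonneg_left h1 ha.le]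
  have hz1 : 1 < z₀ := by
    by_contra h
    push_neg at h
    exact absurd hq (ne_of_lt (hqneg1 z₀ hz₀ h))
  -- sign of q
  have hqneg : ∀ x : ℝ, 0 < x → x < z₀ → hpjQ a (m + 2) x < 0 := by
    intro x hx hxz
    rcases le_or_gt x 1 with h1 | h1
    · exact hqneg1 x hx h1
    · have := hqmono (Set.mem_Ici.mpr h1.le) (Set.mem_Ici.mpr hz1.le) hxz
      linarith [this, hq.ge]
  have hqpos : ∀ x : ℝ, z₀ < x → 0 < hpjQ a (m + 2) x := by
    intro x hxz
    have := hqmono (Set.mem_Ici.mpr hz1.le) (Set.mem_Ici.mpr (by linarith)) hxz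
    linarith [this, hq.le]
  intro x hx hxne
  rcases lt_or_gt_of_ne hxne with hlt | hgt
  · -- x < z₀ : g strictly decreasing on [x, z₀]
    have hanti : StrictAntiOn (hpjG a (m + 2)) (Set.Icc x z₀) := by
      apply strictAntiOn_of_deriv_neg (convex_Icc x z₀)
      · intro y hy
        exact (hpjG_hasDeriv a m (lt_of_lt_of_le hx hy.1)).continuousAt.continuousWithinAt
      · intro y hy
        rw [interior_Icc] at hy
        have hy0 : 0 < y := lt_trans hx hy.1
        rw [(hpjG_hasDeriv a m hy0).deriv]
        have := hqneg y hy0 hy.2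
        have he : 0 < Real.exp y := Real.exp_pos y
        have hp : 0 < y ^ (m + 3) := pow_pos hy0 _
        exact div_neg_of_neg_of_pos (by nlinarith) hp
    exact hanti (Set.mem_Icc.mpr ⟨le_refl x, hlt.le⟩) (Set.mem_Icc.mpr ⟨hlt.le, le_refl z₀⟩) hlt
  · -- z₀ < x : g strictly increasing on [z₀, x]
    have hmono : StrictMonoOn (hpjG a (m + 2)) (Set.Icc z₀ x) := by
      apply strictMonoOn_of_deriv_pos (convex_Icc z₀ x)
      · intro y hy
        exact (hpjG_hasDeriv a m (lt_of_lt_of_le hz₀ hy.1)).continuousAt.continuousWithinAt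
      · intro y hy
        rw [interior_Icc] at hy
        have hy0 : 0 < y := lt_trans hz₀ hy.1
        rw [(hpjG_hasDeriv a m hy0).deriv]
        have := hqpos y hy.1
        have he : 0 < Real.exp y := Real.exp_pos y
        have hp : 0 < y ^ (m + 3) := pow_pos hy0 _
        positivity
    exact hmono (Set.mem_Icc.mpr ⟨le_refl z₀, hgt.le⟩) (Set.mem_Icc.mpr ⟨hgt.le, le_refl x⟩) hgt
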